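/- Let V, g, φ, ξ, η, A, D be as in the context, let k be a nonzero real number, suppose Aξ = αξ for some real number α (the Hopf case) and that A satisfies the Maeda relations for α. If A_T^{(k)} is η-skewpure with respect to φ, i.e. A_T^{(k)}(φX, Y) + A_T^{(k)}(X, φY) = 0 for all X, Y ∈ D, then A ∘ φ = φ ∘ A. (Theorem 5, Hopf case.) -/

import Mathlib

open scoped InnerProductSpace

/-- The `k`-th Cho operator `F^{(k)}_X Y = g(φ(AX), Y)·ξ − η(Y)·φ(AX) − k·η(X)·φY`. -/
noncomputable def choF {V : Type*} [NormedAddCommGroup V] [InnerProductSpace ℝ V]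
    (φ A : V →ₗ[ℝ] V) (ξ : V) (k : ℝ) (X Y : V) : V :=
  ⟪φ (A X), Y⟫_ℝ • ξ - ⟪Y, ξ⟫_ℝ • φ (A X) - (k * ⟪X, ξ⟫_ℝ) • φ Y

/-- The `k`-th torsion operator `T^{(k)}_X Y = F^{(k)}_X Y − F^{(k)}_Y X`. -/
noncomputable def torT {V : Type*} [NormedAddCommGroup V] [InnerProductSpace ℝ V]
    (φ A : V →ₗ[ℝ] V) (ξ : V) (k : ℝ) (X Y : V) : V :=
  choF φ A ξ k X Y - choF φ A ξ k Y X

/-- `A_T^{(k)}(X, Y) = T^{(k)}_X (A Y) − A (T^{(k)}_X Y)`. -/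
noncomputable def AT {V : Type*} [NormedAddCommGroup V] [InnerProductSpace ℝ V]
    (φ A : V →ₗ[ℝ] V) (ξ : V) (k : ℝ) (X Y : V) : V :=
  torT φ A ξ k X (A Y) - A (torT φ A ξ k X Y)

theorem thm5_hopf {V : Type*} [NormedAddCommGroup V] [InnerProductSpace ℝ V]
    [FiniteDimensional ℝ V] (hdim : 5 ≤ Module.finrank ℝ V)
    (φ : V →ₗ[ℝ] V) (ξ : V) (hξ : ‖ξ‖ = 1)
    (hφφ : ∀ X : V, φ (φ X) = -X + ⟪X, ξ⟫_ℝ • ξ)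
    (hφg : ∀ X Y : V, ⟪φ X, φ Y⟫_ℝ = ⟪X, Y⟫_ℝ - ⟪X, ξ⟫_ℝ * ⟪Y, ξ⟫_ℝ)
    (A : V →ₗ[ℝ] V) (hA : ∀ X Y : V, ⟪A X, Y⟫_ℝ = ⟪X, A Y⟫_ℝ)
    (k : ℝ) (hk : k ≠ 0)
    (α : ℝ) (hAξ : A ξ = α • ξ)
    (hMaeda : ∀ (X : V) (l : ℝ), ‖X‖ = 1 → ⟪X, ξ⟫_ℝ = 0 → A X = l • X →
      2 * l - α ≠ 0 ∧ A (φ X) = ((α * l + 2) / (2 * l - α)) • φ X)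
    (hskew : ∀ X Y : V, ⟪X, ξ⟫_ℝ = 0 → ⟪Y, ξ⟫_ℝ = 0 →
      AT φ A ξ k (φ X) Y + AT φ A ξ k X (φ Y) = 0) :
    ∀ X : V, A (φ X) = φ (A X) := by
  have hξξ : ⟪ξ, ξ⟫_ℝ = 1 := by
    rw [real_inner_self_eq_norm_sq, hξ]; norm_num
  have hξ0 : ξ ≠ 0 := by
    intro h; rw [h, norm_zero] at hξ; norm_num at hξ
  -- φ ξ = 0
  have hφξ : φ ξ = 0 := by
    have := hφg ξ ξ
    rw [hξξ] at this
    have h0 : ⟪φ ξ, φ ξ⟫_ℝ = 0 := by rw [this]; ring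
    exact inner_self_eq_zero.mp h0
  -- ⟪φ X, ξ⟫ = 0 for all X
  have hη : ∀ X : V, ⟪φ X, ξ⟫_ℝ = 0 := by
    have h2 : ∀ W : V, ⟪φ (φ W), ξ⟫_ℝ = 0 := by
      intro W
      rw [hφφ W]
      rw [inner_add_left, inner_neg_left, real_inner_smul_left, hξξ]
      ring
    intro X
    have hX : X = -φ (φ X) + ⟪X, ξ⟫_ℝ • ξ := by
      rw [hφφ X]; abel
    calc ⟪φ X, ξ⟫_ℝ = ⟪φ (-φ (φ X) + ⟪X, ξ⟫_ℝ • ξ), ξ⟫_ℝ := by rw [← hX]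
      _ = -⟪φ (φ (φ X)), ξ⟫_ℝ + ⟪X, ξ⟫_ℝ * ⟪φ ξ, ξ⟫_ℝ := by
          rw [map_add, map_neg, map_smul, inner_add_left, inner_neg_left, real_inner_smul_left]
      _ = 0 := by rw [h2 (φ X), hφξ, inner_zero_left]; ring
  -- key lemma: eigenvectors
  have key : ∀ (X : V) (l : ℝ), ‖X‖ = 1 → ⟪X, ξ⟫_ℝ = 0 → A X = l • X →
      A (φ X) = l • φ X := by
    intro X l hX1 hXξ hAX
    obtain ⟨hne, hAφX⟩ := hMaeda X l hX1 hXξ hAX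
    set μ : ℝ := (α * l + 2) / (2 * l - α) with hμ
    have hφφX : φ (φ X) = -X := by rw [hφφ, hXξ]; simp
    have hXX : ⟪X, X⟫_ℝ = 1 := by rw [real_inner_self_eq_norm_sq, hX1]; norm_num
    have hφXφX : ⟪φ X, φ X⟫_ℝ = 1 := by rw [hφg, hXX, hXξ]; ring
    have hφXξ : ⟪φ X, ξ⟫_ℝ = 0 := hη X
    have hsum : AT φ A ξ k (φ X) X + AT φ A ξ k X (φ X) = ((μ + l) * (μ - l)) • ξ := by
      simp only [AT, torT, choF, hAφX, hAX, map_smul, map_neg, map_sub, map_add,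
        hφφX, hAξ, hφξ, inner_smul_left, inner_smul_right, inner_neg_left, inner_neg_right,
        hXX, hφXφX, hXξ, hφXξ, hξξ, RCLike.star_def, conj_trivial, inner_zero_left,
        inner_zero_right, smul_zero, smul_neg, neg_neg, mul_zero, zero_smul, mul_one,
        sub_zero, zero_sub, neg_zero]
      match_scalars <;> ring
    have h0 : ((μ + l) * (μ - l)) • ξ = 0 := by
      rw [← hsum]; exact hskew X X hXξ hXξ
    have hscal : (μ + l) * (μ - l) = 0 := by
      by_contra h
      exact hξ0 ((smul_eq_zero.mp h0).resolve_left h)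
    have hμl : μ = l := by
      rcases mul_eq_zero.mp hscal with h | h
      · exfalso
        have : α * l + 2 = -l * (2 * l - α) := by
          have : μ = -l := by linarith
          rw [hμ] at this
          rw [div_eq_iff hne] at this
          linarith
        nlinarith [sq_nonneg l]
      · linarith
    rw [hAφX, hμl]
  -- spectral theorem on D = (ℝ ∙ ξ)ᗮ
  set K : Submodule ℝ V := (ℝ ∙ ξ)ᗮ with hK
  have hmem : ∀ x : V, x ∈ K ↔ ⟪x, ξ⟫_ℝ = 0 := by
    intro x
    rw [hK, Submodule.mem_orthogonal_singleton_iff_inner_right, real_inner_comm]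
  have hAK : ∀ x ∈ K, A x ∈ K := by
    intro x hx
    rw [hmem] at hx ⊢
    rw [hA x ξ, hAξ, real_inner_smul_right, hx, mul_zero]
  let T : K →ₗ[ℝ] K := A.restrict hAK
  have hT : T.IsSymmetric := by
    intro x y
    exact hA x y
  have hn : Module.finrank ℝ K = Module.finrank ℝ K := rfl
  set b := hT.eigenvectorBasis hn with hb
  have hzero : ∀ x ∈ K, A (φ x) = φ (A x) := by
    intro x hx
    have hrep := b.sum_repr ⟨x, hx⟩
    have hcoe : x = ∑ i, b.repr ⟨x, hx⟩ i • ((b i : V)) := by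
      have := congrArg (K.subtype) hrep
      simpa using this.symm
    have hbi : ∀ i, A (φ (b i : V)) = φ (A (b i : V)) := by
      intro i
      have hev := hT.apply_eigenvectorBasis hn i
      have hAe : A ((b i : V)) = hT.eigenvalues hn i • (b i : V) := by
        have h1 := congrArg (Subtype.val) hev
        rw [show T (b i) = A.restrict hAK (b i) from rfl] at h1
        rw [LinearMap.restrict_coe_apply] at h1
        simpa using h1
      have hnorm : ‖(b i : V)‖ = 1 := by
        have := b.orthonormal.1 i
        exact this
      have hmemb : ⟪(b i : V), ξ⟫_ℝ = 0 := (hmem _).mp (b i).2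
      rw [key (b i : V) (hT.eigenvalues hn i) hnorm hmemb hAe, hAe, map_smul]
    rw [hcoe]
    simp only [map_sum, map_smul]
    exact Finset.sum_congr rfl fun i _ => by rw [hbi i]
  intro X
  have hdecomp : X = (X - ⟪X, ξ⟫_ℝ • ξ) + ⟪X, ξ⟫_ℝ • ξ := by abel
  have hmemX : (X - ⟪X, ξ⟫_ℝ • ξ) ∈ K := by
    rw [hmem]
    rw [inner_sub_left, real_inner_smul_left, hξξ]
    ring
  rw [hdecomp]
  simp only [map_add, map_smul]
  rw [hzero _ hmemX, hφξ, hAξ, map_smul, hφξ]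
  simp
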